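/- Let M be a metric space, x : ℝ → M a function, and V : M → ℝ a continuous function such that V ∘ x is monotone non-decreasing on ℝ. Then V is constant on the ω-limit set of x: for any two points p and q in the ω-limit set of x, V(p) = V(q). -/
import Mathlib

open Filter Topology

/-- The ω-limit set of a function `x : ℝ → M`: points `p` for which there is a strictly
increasing sequence `t n → ∞` with `x (t n) → p`. -/
def omegaLimitSet {M : Type*} [MetricSpace M] (x : ℝ → M) : Set M :=
  {p | ∃ t : ℕ → ℝ, StrictMono t ∧ Tendsto t atTop atTop ∧
    Tendsto (fun n => x (t n)) atTop (𝓝 p)}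

lemma aux_le {M : Type*} [MetricSpace M] (x : ℝ → M) (V : M → ℝ)
    (hV : Continuous V) (hmono : Monotone (V ∘ x))
    (p q : M) (hp : p ∈ omegaLimitSet x) (hq : q ∈ omegaLimitSet x) :
    V p ≤ V q := by
  obtain ⟨s, hs_mono, hs_top, hs_lim⟩ := hp
  obtain ⟨t, ht_mono, ht_top, ht_lim⟩ := hq
  have hVp : Tendsto (fun n => V (x (s n))) atTop (𝓝 (V p)) :=
    (hV.tendsto p).comp hs_lim
  have hVq : Tendsto (fun n => V (x (t n))) atTop (𝓝 (V q)) :=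
    (hV.tendsto q).comp ht_lim
  have hmq : Monotone (fun n => V (x (t n))) := fun a b hab =>
    hmono (ht_mono.monotone hab)
  refine le_of_tendsto hVp (Eventually.of_forall fun n => ?_)
  obtain ⟨m, hm⟩ := (ht_top.eventually_ge_atTop (s n)).exists
  exact le_trans (hmono hm) (hmq.ge_of_tendsto hVq m)

/-- If `V` is continuous and non-decreasing along `x`, then `V` is constant on the
ω-limit set of `x`. -/
theorem stmt_0 {M : Type*} [MetricSpace M] (x : ℝ → M) (V : M → ℝ)
    (hV : Continuous V) (hmono : Monotone (V ∘ x))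
    (p q : M) (hp : p ∈ omegaLimitSet x) (hq : q ∈ omegaLimitSet x) :
    V p = V q :=
  le_antisymm (aux_le x V hV hmono p q hp hq) (aux_le x V hV hmono q p hq hp)
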